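/- One step of the Urysohn identification iteration strictly decreases the squared distance to any exact solution when the prediction error is nonzero: if U is any matrix with y_i = Σ_j U[j, k_{i−j+1}], Û is the current estimate, ŷ_i = Σ_j Û[j, k_{i−j+1}], and the update adds α(y_i − ŷ_i)/m to each entry Û[j, k_{i−j+1}] for j = 1,…,m, then the squared Frobenius distance e² = ‖U − Û‖² satisfies e²_new = e²_old − ((2α − α²)/m)(ŷ_i − y_i)². In particular, for α ∈ (0,2) the distance is non-increasing and strictly decreases whenever ŷ_i ≠ y_i. -/
import Mathlib


/-- one step of the Urysohn identification iteration. If `U` is any exact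
Urysohn matrix (`y = Σ_j U[j, k_{i-j+1}]`), `Û` the current estimate with prediction
`ŷ = Σ_j Û[j, k_{i-j+1}]`, and the update adds `α (y - ŷ)/m` to each entry
`Û[j, k_{i-j+1}]`, then the squared Frobenius distance satisfies
`e²_new = e²_old − ((2α − α²)/m)(ŷ − y)²`; in particular for `α ∈ (0,2)` the distance is
non-increasing and strictly decreases whenever `ŷ ≠ y`. -/
theorem urysohn_update_error (m n : ℕ) (hm : 0 < m)
    (U Uhat Uhat' : Matrix (Fin m) (Fin n) ℝ) (ks : Fin m → Fin n) (α : ℝ)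
    (y yhat : ℝ)
    (hy : y = ∑ j : Fin m, U j (ks j))
    (hyhat : yhat = ∑ j : Fin m, Uhat j (ks j))
    (hupd : ∀ j c, Uhat' j c = Uhat j c + if c = ks j then α * (y - yhat) / m else 0) :
    (∑ j : Fin m, ∑ c : Fin n, (U j c - Uhat' j c) ^ 2) =
      (∑ j : Fin m, ∑ c : Fin n, (U j c - Uhat j c) ^ 2)
        - ((2 * α - α ^ 2) / m) * (yhat - y) ^ 2 ∧
    (α ∈ Set.Ioo (0 : ℝ) 2 →
      (∑ j : Fin m, ∑ c : Fin n, (U j c - Uhat' j c) ^ 2) ≤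
        (∑ j : Fin m, ∑ c : Fin n, (U j c - Uhat j c) ^ 2) ∧
      (yhat ≠ y →
        (∑ j : Fin m, ∑ c : Fin n, (U j c - Uhat' j c) ^ 2) <
          (∑ j : Fin m, ∑ c : Fin n, (U j c - Uhat j c) ^ 2))) := by
  have hm' : (m : ℝ) ≠ 0 := Nat.cast_ne_zero.mpr hm.ne'
  set d : ℝ := α * (y - yhat) / m with hd
  have key : ∀ j : Fin m, (∑ c : Fin n, (U j c - Uhat' j c) ^ 2) =
      (∑ c : Fin n, (U j c - Uhat j c) ^ 2)
        + (d ^ 2 - 2 * d * (U j (ks j) - Uhat j (ks j))) := by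
    intro j
    have : ∀ c : Fin n, (U j c - Uhat' j c) ^ 2 =
        (U j c - Uhat j c) ^ 2
          + (if c = ks j then d ^ 2 - 2 * d * (U j (ks j) - Uhat j (ks j)) else 0) := by
      intro c
      rw [hupd j c]
      by_cases h : c = ks j
      · subst h; simp only [if_pos]; ring
      · simp only [if_neg h]; ring
    simp only [this, Finset.sum_add_distrib, Finset.sum_ite_eq' Finset.univ (ks j),
      Finset.mem_univ, if_pos]
  have hsum : (∑ j : Fin m, ∑ c : Fin n, (U j c - Uhat' j c) ^ 2) =
      (∑ j : Fin m, ∑ c : Fin n, (U j c - Uhat j c) ^ 2)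
        - ((2 * α - α ^ 2) / m) * (yhat - y) ^ 2 := by
    have hconst : (∑ j : Fin m, (d ^ 2 - 2 * d * (U j (ks j) - Uhat j (ks j)))) =
        m * d ^ 2 - 2 * d * (y - yhat) := by
      rw [Finset.sum_sub_distrib, Finset.sum_const, ← Finset.mul_sum, Finset.sum_sub_distrib,
        ← hy, ← hyhat]
      simp [nsmul_eq_mul]
    simp only [key, Finset.sum_add_distrib]
    rw [hconst, hd]
    field_simp
    ring
  refine ⟨hsum, fun hα => ?_⟩
  obtain ⟨h0, h2⟩ := hα
  have hcoef : 0 < (2 * α - α ^ 2) / m :=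
    div_pos (by nlinarith) (Nat.cast_pos.mpr hm)
  constructor
  · rw [hsum]; nlinarith [sq_nonneg (yhat - y), hcoef.le, mul_nonneg hcoef.le (sq_nonneg (yhat - y))]
  · intro hne
    rw [hsum]
    have hne' : yhat - y ≠ 0 := sub_ne_zero.mpr hne
    have : 0 < (yhat - y) ^ 2 := by positivity
    nlinarith [mul_pos hcoef this]
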